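/- Let λ ∈ (−1,0), α ∈ ℝ, β = λ + α > 1, and let f be the map on L = ℝ × [−1,1] given by f(x,s) = (λx + αs, Ψ(s + (λx + αs) − x)), where Ψ(τ) = τ if |τ| ≤ 1 and Ψ(τ) = 0 otherwise. Then for every point (x₀,s₀) ∈ L not belonging to the fixed-point segment EF = {(x,s) : x = αs/(1−λ), −1 ≤ s ≤ 1}, there exists k ∈ ℕ such that the s-coordinate of f^k(x₀,s₀) equals 0. -/

import Mathlib

open Set

/-- The cut-off function `Ψ` for the interval `[-1,1]`. -/
noncomputable def Psi : ℝ → ℝ := fun τ => if |τ| ≤ 1 then τ else 0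

/-- The risk management map `f(x,s) = (λx + αs, Ψ(s + (λx + αs) - x))`. -/
noncomputable def riskMap (lam a : ℝ) : ℝ × ℝ → ℝ × ℝ :=
  fun p => (lam * p.1 + a * p.2, Psi (p.2 + (lam * p.1 + a * p.2) - p.1))

/-- **Theorem 3, part 1.** Let `λ ∈ (-1,0)` and `β = λ + α > 1`. Then
every point of `L = ℝ × [-1,1]` outside the fixed-point segment
`EF = {(x,s) : x = αs/(1-λ), -1 ≤ s ≤ 1}` reaches the line `s = 0` in finitely many
iterations of the risk management map. -/
theorem riskMap_reaches_zero_section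
    (lam a : ℝ) (hlam : lam ∈ Ioo (-1 : ℝ) 0) (hbeta : 1 < lam + a) :
    ∀ x₀ s₀ : ℝ, s₀ ∈ Icc (-1 : ℝ) 1 → x₀ ≠ a * s₀ / (1 - lam) →
      ∃ k : ℕ, ((riskMap lam a)^[k] (x₀, s₀)).2 = 0 := by
  intro x₀ s₀ hs₀ hx₀
  by_contra h
  push_neg at h
  have h1lam : (0:ℝ) < 1 - lam := by linarith [hlam.2]
  set f := riskMap lam a with hf
  set p : ℕ → ℝ × ℝ := fun k => f^[k] (x₀, s₀) with hp
  -- all s-coordinates stay in [-1,1]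
  have hsIcc : ∀ k, (p k).2 ∈ Icc (-1:ℝ) 1 := by
    intro k
    cases k with
    | zero => simpa [hp] using hs₀
    | succ n =>
      have : p (n+1) = f (p n) := by
        simp [hp, Function.iterate_succ_apply']
      rw [this]
      simp only [hf, riskMap, Psi]
      split
      · rename_i habs
        exact abs_le.mp habs
      · constructor <;> norm_num
  -- the recursion: since s never becomes 0, Ψ is the identity along the orbit
  have key : ∀ k, (p (k+1)).2 = (p k).2 + (p (k+1)).1 - (p k).1 ∧
      (p (k+1)).1 = lam * (p k).1 + a * (p k).2 := by
    intro k
    have hstep : p (k+1) = f (p k) := by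
      simp [hp, Function.iterate_succ_apply']
    have h0 : (p (k+1)).2 ≠ 0 := h (k+1)
    rw [hstep] at h0 ⊢
    simp only [hf, riskMap, Psi] at h0 ⊢
    split at h0 <;> split
    · exact ⟨by ring, trivial⟩
    · tauto
    · tauto
    · exact absurd rfl h0
  -- D k = (1-λ) x_k − a s_k multiplies by β = λ+a each step
  set D : ℕ → ℝ := fun k => (1 - lam) * (p k).1 - a * (p k).2 with hD
  have hDrec : ∀ k, D (k+1) = (lam + a) * D k := by
    intro k
    obtain ⟨h1, h2⟩ := key k
    simp only [hD]
    rw [h1, h2]; ring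
  have hDpow : ∀ k, D k = (lam + a)^k * D 0 := by
    intro k
    induction k with
    | zero => simp
    | succ n ih => rw [hDrec n, ih, pow_succ]; ring
  have hD0 : D 0 ≠ 0 := by
    intro hc
    apply hx₀
    simp only [hD, hp, Function.iterate_zero, id] at hc
    field_simp
    linarith
  -- choose k with |D k| > 2
  obtain ⟨n, hn⟩ := pow_unbounded_of_one_lt (2 / |D 0|) hbeta
  have hDn : 2 < |D n| := by
    rw [hDpow n, abs_mul, abs_pow]
    have hβpos : (0:ℝ) < lam + a := by linarith
    rw [abs_of_pos hβpos]
    have hD0pos : 0 < |D 0| := abs_pos.mpr hD0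
    calc (2:ℝ) = 2 / |D 0| * |D 0| := by field_simp
    _ < (lam + a)^n * |D 0| := by
        exact mul_lt_mul_of_pos_right hn hD0pos
  -- but s_{n+1} - s_n = -D n, with both s in [-1,1]
  have hdiff : (p (n+1)).2 - (p n).2 = -D n := by
    obtain ⟨h1, h2⟩ := key n
    simp only [hD]
    rw [h1, h2]; ring
  have h1 := hsIcc n
  have h2 := hsIcc (n+1)
  have hle : |D n| ≤ 2 := by
    have : D n = (p n).2 - (p (n+1)).2 := by linarith [hdiff]
    rw [this]
    rw [abs_le]
    constructor <;> linarith [h1.1, h1.2, h2.1, h2.2]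
  linarith
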